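/- Let D be a squarefree integer and a ∈ Z₂. The quadratic form x² + y² − Dz² − Dw² represents a over the 2-adic integers Z₂. -/

import Mathlib

open Polynomial

private lemma hensel_quad (u c : ℤ_[2]) (h : ‖u - c‖ < ‖2 * u‖ ^ 2) :
    ∃ x : ℤ_[2], u * x ^ 2 = c := by
  have h1 : (C u * X ^ 2 - C c).eval 1 = u - c := by simp
  have h2 : ((C u * X ^ 2 - C c).derivative).eval 1 = 2 * u := by
    simp [derivative_sub]
    ring
  obtain ⟨z, hz, -, -, -⟩ := hensels_lemma (F := C u * X ^ 2 - C c) (a := 1)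
    (by rw [coe_aeval_eq_eval, h1, h2]; exact h)
  refine ⟨z, ?_⟩
  rw [coe_aeval_eq_eval] at hz
  simp only [eval_sub, eval_mul, eval_pow, eval_C, eval_X] at hz
  exact sub_eq_zero.mp hz

private lemma norm_le_of_dvd {n : ℕ} {x : ℤ_[2]} (h : (2:ℤ_[2])^n ∣ x) :
    ‖x‖ ≤ (2:ℝ)^(-(n:ℤ)) := by
  obtain ⟨t, rfl⟩ := h
  rw [norm_mul]
  have h2 : ‖(2:ℤ_[2])^n‖ = (2:ℝ)^(-(n:ℤ)) := by
    have := PadicInt.norm_p_pow (p := 2) n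
    exact_mod_cast this
  calc ‖(2:ℤ_[2])^n‖ * ‖t‖ ≤ ‖(2:ℤ_[2])^n‖ * 1 := by
        gcongr; exact PadicInt.norm_le_one t
    _ = (2:ℝ)^(-(n:ℤ)) := by rw [mul_one, h2]

private lemma norm_two : ‖(2:ℤ_[2])‖ = 2⁻¹ := by
  have := PadicInt.norm_p (p := 2); exact_mod_cast this

set_option maxHeartbeats 1000000 in
private lemma zc1 : ∀ d m : ZMod 8, (ZMod.castHom (by norm_num : (2:ℕ) ∣ 8) (ZMod 2) d = 1) →
    (ZMod.castHom (by norm_num : (4:ℕ) ∣ 8) (ZMod 4) m ≠ 0) →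
    ∃ y z w : ZMod 8, 1 + y^2 - d*z^2 - d*w^2 = m := by decide

set_option maxHeartbeats 4000000 in
set_option maxRecDepth 10000 in
private lemma zc2' : ∀ d m : ZMod 32, (ZMod.castHom (by norm_num : (4:ℕ) ∣ 32) (ZMod 4) d = 2) →
    (ZMod.castHom (by norm_num : (4:ℕ) ∣ 32) (ZMod 4) m ≠ 0) →
    ∃ x y : ZMod 32, x^2 + y^2 - d - d*0^2 = m ∨ x^2 + y^2 - d - d*1^2 = m ∨
      x^2 + y^2 - d - d*2^2 = m := by decide

private lemma zc2 : ∀ d m : ZMod 32, (ZMod.castHom (by norm_num : (4:ℕ) ∣ 32) (ZMod 4) d = 2) →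
    (ZMod.castHom (by norm_num : (4:ℕ) ∣ 32) (ZMod 4) m ≠ 0) →
    ∃ x y w : ZMod 32, x^2 + y^2 - d - d*w^2 = m := by
  intro d m h1 h2
  obtain ⟨x, y, h | h | h⟩ := zc2' d m h1 h2
  exacts [⟨x,y,0,h⟩, ⟨x,y,1,h⟩, ⟨x,y,2,h⟩]

private lemma key (D : ℤ) (hD : Squarefree D) (u : ℤ_[2]) (hu : ¬ (2:ℤ_[2])^2 ∣ u) :
    ∃ x y z w : ℤ_[2], x^2 + y^2 - (D:ℤ_[2])*z^2 - (D:ℤ_[2])*w^2 = u := by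
  have hD4 : ¬ (4:ℤ) ∣ D := by
    rintro ⟨t, ht⟩
    have := hD 2 ⟨t, by linarith⟩
    exact absurd this (by decide)
  set m : ℕ := u.appr 5 with hm
  have h32 : (2:ℤ_[2])^5 ∣ (u - (m:ℤ_[2])) := by
    have h := PadicInt.appr_spec 5 u
    rw [Ideal.mem_span_singleton] at h
    exact_mod_cast h
  have hm4 : ¬ (4:ℤ) ∣ (m:ℤ) := by
    rintro ⟨t, ht⟩
    apply hu
    have h1 : (2:ℤ_[2])^2 ∣ (m:ℤ_[2]) := by
      refine ⟨(t:ℤ_[2]), ?_⟩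
      have h2 := congrArg (fun k : ℤ => (k : ℤ_[2])) ht
      push_cast at h2
      rw [h2]; ring
    have h2 : (2:ℤ_[2])^2 ∣ u - (m:ℤ_[2]) := dvd_trans (pow_dvd_pow 2 (by norm_num)) h32
    simpa using dvd_add h2 h1
  rcases Int.even_or_odd D with ⟨E, hE⟩ | ⟨E, hE⟩
  · -- even case : D = E + E
    have hEodd : ¬ (2:ℤ) ∣ E := by rintro ⟨t, ht⟩; exact hD4 ⟨t, by omega⟩
    have hd4 : (ZMod.castHom (by norm_num : (4:ℕ) ∣ 32) (ZMod 4)) ((D : ZMod 32)) = 2 := by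
      rw [map_intCast]
      obtain ⟨t, ht⟩ : ∃ t, E = 2*t + 1 := ⟨E/2, by omega⟩
      rw [hE, ht]
      push_cast
      ring_nf
      rw [show ((4:ZMod 4)) = 0 by decide]
      ring
    have hm4' : (ZMod.castHom (by norm_num : (4:ℕ) ∣ 32) (ZMod 4)) (((m:ℤ) : ZMod 32)) ≠ 0 := by
      rw [map_intCast, Ne, ZMod.intCast_zmod_eq_zero_iff_dvd]
      exact hm4
    obtain ⟨x', y', w', hxyw⟩ := zc2 _ _ hd4 hm4'
    have h5 : (32:ℤ) ∣ ((x'.val:ℤ)^2 + (y'.val:ℤ)^2 - D - D*(w'.val:ℤ)^2 - (m:ℤ)) := by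
      have h0 : (((x'.val:ℤ)^2 + (y'.val:ℤ)^2 - D - D*(w'.val:ℤ)^2 - (m:ℤ) : ℤ) : ZMod 32) = 0 := by
        push_cast
        simp only [ZMod.natCast_val, ZMod.cast_id', id_eq]
        push_cast at hxyw
        linear_combination hxyw
      exact (ZMod.intCast_zmod_eq_zero_iff_dvd _ 32).mp h0
    have h5' : (2:ℤ_[2])^5 ∣ ((x'.val:ℤ_[2])^2 + (y'.val:ℤ_[2])^2 - D - D*(w'.val:ℤ_[2])^2 - (m:ℤ_[2])) := by
      obtain ⟨t, ht⟩ := h5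
      refine ⟨(t:ℤ_[2]), ?_⟩
      have h2 := congrArg (fun k : ℤ => (k : ℤ_[2])) ht
      push_cast at h2
      rw [h2]; norm_num
    set c : ℤ_[2] := (x'.val:ℤ_[2])^2 + (y'.val:ℤ_[2])^2 - D*(w'.val:ℤ_[2])^2 - u with hc
    have hdvd : (2:ℤ_[2])^5 ∣ ((D:ℤ_[2]) - c) := by
      have heq : (D:ℤ_[2]) - c =
          -(((x'.val:ℤ_[2])^2 + (y'.val:ℤ_[2])^2 - D - D*(w'.val:ℤ_[2])^2 - (m:ℤ_[2]))) + (u - (m:ℤ_[2])) := by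
        rw [hc]; ring
      rw [heq]
      exact dvd_add (dvd_neg.mpr h5') h32
    have hDnorm : ‖(D:ℤ_[2])‖ = 2⁻¹ := by
      have hE1 : ‖(E:ℤ_[2])‖ = 1 := by
        have hlt : ¬ ‖((E:ℤ):ℤ_[2])‖ < 1 := by
          rw [PadicInt.norm_int_lt_one_iff_dvd]
          exact_mod_cast hEodd
        exact le_antisymm (PadicInt.norm_le_one _) (not_lt.mp hlt)
      have : (D:ℤ_[2]) = 2 * (E:ℤ_[2]) := by
        have := congrArg (fun k : ℤ => (k : ℤ_[2])) hE
        push_cast at this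
        rw [this]; ring
      rw [this, norm_mul, norm_two, hE1, mul_one]
    have hnorm : ‖(D:ℤ_[2]) - c‖ < ‖2 * (D:ℤ_[2])‖^2 := by
      have h1 := norm_le_of_dvd hdvd
      rw [norm_mul, norm_two, hDnorm]
      calc ‖(D:ℤ_[2]) - c‖ ≤ (2:ℝ)^(-(5:ℕ):ℤ) := h1
        _ < (2⁻¹ * 2⁻¹)^2 := by norm_num
    obtain ⟨zz, hzz⟩ := hensel_quad _ c hnorm
    refine ⟨(x'.val:ℤ_[2]), (y'.val:ℤ_[2]), zz, (w'.val:ℤ_[2]), ?_⟩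
    rw [hc] at hzz
    linear_combination -hzz
  · -- odd case : D = 2*E + 1
    have hd2 : (ZMod.castHom (by norm_num : (2:ℕ) ∣ 8) (ZMod 2)) ((D : ZMod 8)) = 1 := by
      rw [map_intCast, hE]
      push_cast
      ring_nf
      rw [show ((2:ZMod 2)) = 0 by decide]
      ring
    have hm2 : (ZMod.castHom (by norm_num : (4:ℕ) ∣ 8) (ZMod 4)) (((m:ℤ) : ZMod 8)) ≠ 0 := by
      rw [map_intCast, Ne, ZMod.intCast_zmod_eq_zero_iff_dvd]
      exact hm4
    obtain ⟨y', z', w', hyzw⟩ := zc1 _ _ hd2 hm2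
    have h8 : (8:ℤ) ∣ (1 + (y'.val:ℤ)^2 - D*(z'.val:ℤ)^2 - D*(w'.val:ℤ)^2 - (m:ℤ)) := by
      have h0 : ((1 + (y'.val:ℤ)^2 - D*(z'.val:ℤ)^2 - D*(w'.val:ℤ)^2 - (m:ℤ) : ℤ) : ZMod 8) = 0 := by
        push_cast
        simp only [ZMod.natCast_val, ZMod.cast_id', id_eq]
        push_cast at hyzw
        linear_combination hyzw
      exact (ZMod.intCast_zmod_eq_zero_iff_dvd _ 8).mp h0
    have h8' : (2:ℤ_[2])^3 ∣ (1 + (y'.val:ℤ_[2])^2 - D*(z'.val:ℤ_[2])^2 - D*(w'.val:ℤ_[2])^2 - (m:ℤ_[2])) := by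
      obtain ⟨t, ht⟩ := h8
      refine ⟨(t:ℤ_[2]), ?_⟩
      have h2 := congrArg (fun k : ℤ => (k : ℤ_[2])) ht
      push_cast at h2
      rw [h2]; norm_num
    set c : ℤ_[2] := u - (y'.val:ℤ_[2])^2 + D*(z'.val:ℤ_[2])^2 + D*(w'.val:ℤ_[2])^2 with hc
    have hdvd : (2:ℤ_[2])^3 ∣ ((1:ℤ_[2]) - c) := by
      have heq : (1:ℤ_[2]) - c =
          (1 + (y'.val:ℤ_[2])^2 - D*(z'.val:ℤ_[2])^2 - D*(w'.val:ℤ_[2])^2 - (m:ℤ_[2])) - (u - (m:ℤ_[2])) := by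
        rw [hc]; ring
      rw [heq]
      exact dvd_sub h8' (dvd_trans (pow_dvd_pow 2 (by norm_num)) h32)
    have hnorm : ‖(1:ℤ_[2]) - c‖ < ‖2 * (1:ℤ_[2])‖^2 := by
      have h1 := norm_le_of_dvd hdvd
      rw [mul_one, norm_two]
      calc ‖(1:ℤ_[2]) - c‖ ≤ (2:ℝ)^(-(3:ℕ):ℤ) := h1
        _ < (2⁻¹)^2 := by norm_num
    obtain ⟨x, hx⟩ := hensel_quad _ c hnorm
    refine ⟨x, (y'.val:ℤ_[2]), (z'.val:ℤ_[2]), (w'.val:ℤ_[2]), ?_⟩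
    rw [hc] at hx
    linear_combination hx

/-- For a squarefree integer D and any a ∈ ℤ₂, the quadratic form
x² + y² − Dz² − Dw² represents a over the 2-adic integers. -/
theorem stmt_13 (D : ℤ) (hD : Squarefree D) (a : ℤ_[2]) :
    ∃ x y z w : ℤ_[2],
      x ^ 2 + y ^ 2 - (D : ℤ_[2]) * z ^ 2 - (D : ℤ_[2]) * w ^ 2 = a := by
  by_cases ha : a = 0
  · exact ⟨0, 0, 0, 0, by simp [ha]⟩
  · set N : ℕ := a.valuation with hN
    set r : ℕ := N % 2 with hr
    set k : ℕ := N / 2 with hk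
    set u : ℤ_[2] := (PadicInt.unitCoeff ha : ℤ_[2]) * 2^r with hu
    have hspec := PadicInt.unitCoeff_spec ha
    have hcast : ((2:ℕ):ℤ_[2]) = (2:ℤ_[2]) := by norm_cast
    have hN2 : N = 2*k + r := by omega
    have ha4 : a = 2^(2*k) * u := by
      rw [hu]
      conv_lhs => rw [hspec, hcast, ← hN, hN2]
      ring
    have hu4 : ¬ (2:ℤ_[2])^2 ∣ u := by
      intro hdvd
      have h1 := norm_le_of_dvd (n := 2) hdvd
      have hr01 : r = 0 ∨ r = 1 := by omega
      have h2 : (2:ℝ)⁻¹ ≤ ‖u‖ := by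
        rcases hr01 with h | h <;>
          first
          | (rw [hu, h, norm_mul]; simp [norm_two]; norm_num)
          | (rw [hu, h, norm_mul]; simp [norm_two])
      rw [show ((-(2:ℕ):ℤ)) = (-2 : ℤ) by norm_num] at h1
      norm_num at h1
      linarith
    obtain ⟨x, y, z, w, hxyzw⟩ := key D hD u hu4
    refine ⟨2^k * x, 2^k * y, 2^k * z, 2^k * w, ?_⟩
    rw [ha4]
    linear_combination (2:ℤ_[2])^(2*k) * hxyzw
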